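/- Let n ≥ 1 and let q ∈ ℂ be nonzero and not a root of unity. Let φ be a ℂ-algebra automorphism of 𝔥_n(q) that maps V into V (a graded automorphism). Then there exist a permutation π of Fin n and nonzero scalars ζ_1, …, ζ_n ∈ ℂ such that φ(z_i) = ζ_i · z_{π(i)} for every i. -/

import Mathlib

noncomputable section

open scoped BigOperators

namespace QHeisenberg

/-- Index type for the `3n` generators: `x`-, `y`-, and `z`-variables. -/
abbrev GenIdx (n : ℕ) := Fin n ⊕ (Fin n ⊕ Fin n)

/-- The `x_i` generator in the free algebra. -/
def fX (n : ℕ) (i : Fin n) : FreeAlgebra ℂ (GenIdx n) := FreeAlgebra.ι ℂ (Sum.inl i)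

/-- The `y_i` generator in the free algebra. -/
def fY (n : ℕ) (i : Fin n) : FreeAlgebra ℂ (GenIdx n) := FreeAlgebra.ι ℂ (Sum.inr (Sum.inl i))

/-- The `z_i` generator in the free algebra. -/
def fZ (n : ℕ) (i : Fin n) : FreeAlgebra ℂ (GenIdx n) := FreeAlgebra.ι ℂ (Sum.inr (Sum.inr i))

/-- The defining relations of the q-Heisenberg algebra `𝔥_n(q)`. -/
inductive Rel (n : ℕ) (q : ℂ) :
    FreeAlgebra ℂ (GenIdx n) → FreeAlgebra ℂ (GenIdx n) → Prop
  | xx (i j : Fin n) : Rel n q (fX n i * fX n j) (fX n j * fX n i)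
  | yy (i j : Fin n) : Rel n q (fY n i * fY n j) (fY n j * fY n i)
  | zz (i j : Fin n) : Rel n q (fZ n i * fZ n j) (fZ n j * fZ n i)
  | xz (i : Fin n) : Rel n q (fX n i * fZ n i) (q • (fZ n i * fX n i))
  | yz (i : Fin n) : Rel n q (fY n i * fZ n i) (q⁻¹ • (fZ n i * fY n i))
  | xy (i : Fin n) : Rel n q (fX n i * fY n i) (q⁻¹ • (fY n i * fX n i) + fZ n i)
  | xyne (i j : Fin n) : i ≠ j → Rel n q (fX n i * fY n j) (fY n j * fX n i)
  | xzne (i j : Fin n) : i ≠ j → Rel n q (fX n i * fZ n j) (fZ n j * fX n i)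
  | yzne (i j : Fin n) : i ≠ j → Rel n q (fY n i * fZ n j) (fZ n j * fY n i)

/-- The q-Heisenberg algebra `𝔥_n(q)`. -/
abbrev H (n : ℕ) (q : ℂ) := RingQuot (Rel n q)

/-- The generator `x_i` of `𝔥_n(q)`. -/
def X (n : ℕ) (q : ℂ) (i : Fin n) : H n q := RingQuot.mkAlgHom ℂ (Rel n q) (fX n i)

/-- The generator `y_i` of `𝔥_n(q)`. -/
def Y (n : ℕ) (q : ℂ) (i : Fin n) : H n q := RingQuot.mkAlgHom ℂ (Rel n q) (fY n i)

/-- The generator `z_i` of `𝔥_n(q)`. -/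
def Z (n : ℕ) (q : ℂ) (i : Fin n) : H n q := RingQuot.mkAlgHom ℂ (Rel n q) (fZ n i)

/-- `q` is not a root of unity: `q ^ k ≠ 1` for every `k ≥ 1`. -/
def NotRootOfUnity (q : ℂ) : Prop := ∀ k : ℕ, 1 ≤ k → q ^ k ≠ 1

end QHeisenberg

namespace QHeisenberg

/-! ### A graded representation of `𝔥_n(q)` -/

/-- coefficient sequence for the lowering operator -/
def mu (q : ℂ) : ℕ → ℂ
  | 0 => 0
  | k + 1 => q⁻¹ * mu q k + q ^ k

abbrev Idx (n : ℕ) := (Fin n →₀ ℕ) × ℕ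
abbrev F (n : ℕ) := Idx n →₀ ℂ

def bv {n : ℕ} (p : Idx n) : F n := Finsupp.single p 1

def eps {n : ℕ} (i : Fin n) : Fin n →₀ ℕ := Finsupp.single i 1

def tgt (n : ℕ) (q : ℂ) : GenIdx n → Idx n → F n
  | .inl i => fun p => mu q (p.1 i) • bv (p.1 - eps i, p.2 + 1)
  | .inr (.inl i) => fun p => bv (p.1 + eps i, p.2 + 1)
  | .inr (.inr i) => fun p => (q ^ (p.1 i)) • bv (p.1, p.2 + 2)

def op (n : ℕ) (q : ℂ) (g : GenIdx n) : Module.End ℂ (F n) :=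
  Finsupp.linearCombination ℂ (tgt n q g)

lemma op_apply {n : ℕ} {q : ℂ} (g : GenIdx n) (p : Idx n) :
    op n q g (bv p) = tgt n q g p := by
  simp [op, bv, Finsupp.linearCombination_single]

lemma end_ext {n : ℕ} {L M : Module.End ℂ (F n)} (h : ∀ p, L (bv p) = M (bv p)) : L = M := by
  apply Finsupp.lhom_ext
  intro a b
  have hb : (Finsupp.single a b : F n) = b • bv a := by simp [bv, Finsupp.smul_single]
  rw [hb, map_smul, map_smul, h]

-- index arithmetic helpers
lemma eps_apply_self {n : ℕ} (i : Fin n) : eps i i = 1 := by simp [eps]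
lemma eps_apply_ne {n : ℕ} {i j : Fin n} (h : i ≠ j) : eps i j = 0 := by
  simp [eps, Finsupp.single_apply_eq_zero]; intro he; exact absurd he.symm h

lemma add_eps_sub_eps {n : ℕ} (m : Fin n →₀ ℕ) (i : Fin n) : m + eps i - eps i = m := by
  ext a; simp [Finsupp.tsub_apply, Finsupp.add_apply]

lemma sub_apply_ne {n : ℕ} (m : Fin n →₀ ℕ) {i j : Fin n} (h : i ≠ j) :
    (m - eps i) j = m j := by
  simp [Finsupp.tsub_apply, eps_apply_ne h]

lemma add_apply_ne {n : ℕ} (m : Fin n →₀ ℕ) {i j : Fin n} (h : i ≠ j) :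
    (m + eps i) j = m j := by
  simp [Finsupp.add_apply, eps_apply_ne h]

lemma add_apply_self {n : ℕ} (m : Fin n →₀ ℕ) (i : Fin n) :
    (m + eps i) i = m i + 1 := by
  simp [Finsupp.add_apply, eps_apply_self]

lemma sub_sub_comm' {n : ℕ} (m : Fin n →₀ ℕ) (i j : Fin n) :
    m - eps i - eps j = m - eps j - eps i := by
  ext a; simp only [Finsupp.tsub_apply]; omega

lemma add_sub_comm' {n : ℕ} (m : Fin n →₀ ℕ) {i j : Fin n} (h : i ≠ j) :
    m + eps j - eps i = m - eps i + eps j := by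
  ext a
  simp only [Finsupp.tsub_apply, Finsupp.add_apply, eps]
  rcases eq_or_ne i a with rfl | hi
  · rw [Finsupp.single_eq_of_ne' (by exact fun hja => h hja.symm)]
    simp
  · rw [Finsupp.single_eq_of_ne' hi]; omega

section Rels
variable (n : ℕ) (q : ℂ)

local notation "oX" i => op n q (Sum.inl i)
local notation "oY" i => op n q (Sum.inr (Sum.inl i))
local notation "oZ" i => op n q (Sum.inr (Sum.inr i))

lemma rel_zz (i j : Fin n) : (oZ i) * (oZ j) = (oZ j) * (oZ i) := by
  apply end_ext; intro ⟨m, d⟩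
  simp only [Module.End.mul_apply, op_apply, tgt, map_smul, op_apply, smul_smul, Nat.add_assoc]
  ring_nf

lemma rel_yy (i j : Fin n) : (oY i) * (oY j) = (oY j) * (oY i) := by
  apply end_ext; intro ⟨m, d⟩
  simp only [Module.End.mul_apply, op_apply, tgt, Nat.add_assoc]
  rw [add_right_comm]

lemma rel_xx (i j : Fin n) : (oX i) * (oX j) = (oX j) * (oX i) := by
  rcases eq_or_ne i j with rfl | hij
  · rfl
  apply end_ext; intro ⟨m, d⟩
  simp only [Module.End.mul_apply, op_apply, tgt, map_smul, op_apply, smul_smul, Nat.add_assoc]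
  rw [sub_apply_ne m hij, sub_apply_ne m hij.symm, sub_sub_comm', mul_comm]

lemma rel_xz (i : Fin n) : (oX i) * (oZ i) = q • ((oZ i) * (oX i)) := by
  apply end_ext; intro ⟨m, d⟩
  simp only [Module.End.mul_apply, LinearMap.smul_apply, op_apply, tgt, map_smul, op_apply,
    smul_smul, Nat.add_assoc, Nat.reduceAdd]
  congr 1
  rcases hmi : m i with _ | k
  · simp [mu]
  · have h1 : (m - eps i) i = k := by
      simp [Finsupp.tsub_apply, eps_apply_self, hmi]
    rw [h1, pow_succ]
    ring

lemma rel_yz (hq : q ≠ 0) (i : Fin n) : (oY i) * (oZ i) = q⁻¹ • ((oZ i) * (oY i)) := by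
  apply end_ext; intro ⟨m, d⟩
  simp only [Module.End.mul_apply, LinearMap.smul_apply, op_apply, tgt, map_smul, op_apply,
    smul_smul, Nat.add_assoc, Nat.reduceAdd, add_apply_self]
  congr 1
  rw [pow_succ]
  field_simp

lemma rel_xy (i : Fin n) : (oX i) * (oY i) = q⁻¹ • ((oY i) * (oX i)) + (oZ i) := by
  apply end_ext; intro ⟨m, d⟩
  simp only [Module.End.mul_apply, LinearMap.smul_apply, LinearMap.add_apply, op_apply, tgt,
    map_smul, op_apply, smul_smul, Nat.add_assoc, Nat.reduceAdd, add_apply_self, add_eps_sub_eps]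
  rcases hmi : m i with _ | k
  · have h0 : m - eps i = m := by
      ext a; simp only [Finsupp.tsub_apply, eps]
      rcases eq_or_ne i a with rfl | hi
      · simp [hmi]
      · rw [Finsupp.single_eq_of_ne' hi]; omega
    rw [h0]
    simp [mu]
  · have hsub : m - eps i + eps i = m := by
      ext a; simp only [Finsupp.tsub_apply, Finsupp.add_apply, eps]
      rcases eq_or_ne i a with rfl | hi
      · simp only [Finsupp.single_eq_same, hmi]; omega
      · rw [Finsupp.single_eq_of_ne' hi]; omega
    rw [hsub, mu, ← add_smul]

lemma rel_xyne (i j : Fin n) (h : i ≠ j) : (oX i) * (oY j) = (oY j) * (oX i) := by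
  apply end_ext; intro ⟨m, d⟩
  simp only [Module.End.mul_apply, op_apply, tgt, map_smul, op_apply, Nat.add_assoc,
    add_apply_ne m (h.symm : j ≠ i), add_sub_comm' m h]

lemma rel_xzne (i j : Fin n) (h : i ≠ j) : (oX i) * (oZ j) = (oZ j) * (oX i) := by
  apply end_ext; intro ⟨m, d⟩
  simp only [Module.End.mul_apply, op_apply, tgt, map_smul, op_apply, smul_smul, Nat.add_assoc,
    sub_apply_ne m (h : i ≠ j)]
  rw [mul_comm]

lemma rel_yzne (i j : Fin n) (h : i ≠ j) : (oY i) * (oZ j) = (oZ j) * (oY i) := by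
  apply end_ext; intro ⟨m, d⟩
  simp only [Module.End.mul_apply, op_apply, tgt, map_smul, op_apply, Nat.add_assoc,
    add_apply_ne m (h : i ≠ j)]

end Rels

/-- The representation of `𝔥_n(q)` on `F n`. -/
def rep (n : ℕ) (q : ℂ) (hq : q ≠ 0) : H n q →ₐ[ℂ] Module.End ℂ (F n) :=
  RingQuot.liftAlgHom ℂ ⟨FreeAlgebra.lift ℂ (op n q), by
    intro a b r
    cases r with
    | xx i j => simp only [map_mul, fX, FreeAlgebra.lift_ι_apply]; exact rel_xx n q i j
    | yy i j => simp only [map_mul, fY, FreeAlgebra.lift_ι_apply]; exact rel_yy n q i j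
    | zz i j => simp only [map_mul, fZ, FreeAlgebra.lift_ι_apply]; exact rel_zz n q i j
    | xz i =>
        simp only [map_mul, map_smul, fX, fZ, FreeAlgebra.lift_ι_apply]; exact rel_xz n q i
    | yz i =>
        simp only [map_mul, map_smul, fY, fZ, FreeAlgebra.lift_ι_apply]; exact rel_yz n q hq i
    | xy i =>
        simp only [map_mul, map_add, map_smul, fX, fY, fZ, FreeAlgebra.lift_ι_apply]
        exact rel_xy n q i
    | xyne i j h =>
        simp only [map_mul, fX, fY, FreeAlgebra.lift_ι_apply]; exact rel_xyne n q i j h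
    | xzne i j h =>
        simp only [map_mul, fX, fZ, FreeAlgebra.lift_ι_apply]; exact rel_xzne n q i j h
    | yzne i j h =>
        simp only [map_mul, fY, fZ, FreeAlgebra.lift_ι_apply]; exact rel_yzne n q i j h⟩

variable {n : ℕ} {q : ℂ}

lemma rep_X (hq : q ≠ 0) (i : Fin n) : rep n q hq (X n q i) = op n q (Sum.inl i) := by
  rw [X, rep, RingQuot.liftAlgHom_mkAlgHom_apply, fX, FreeAlgebra.lift_ι_apply]

lemma rep_Y (hq : q ≠ 0) (i : Fin n) :
    rep n q hq (Y n q i) = op n q (Sum.inr (Sum.inl i)) := by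
  rw [Y, rep, RingQuot.liftAlgHom_mkAlgHom_apply, fY, FreeAlgebra.lift_ι_apply]

lemma rep_Z (hq : q ≠ 0) (i : Fin n) :
    rep n q hq (Z n q i) = op n q (Sum.inr (Sum.inr i)) := by
  rw [Z, rep, RingQuot.liftAlgHom_mkAlgHom_apply, fZ, FreeAlgebra.lift_ι_apply]


/-! ### Coefficient machinery -/

section Machinery
variable {n : ℕ} {q : ℂ}

/-- All generators of `𝔥_n(q)` in one family. -/
def gen (n : ℕ) (q : ℂ) : GenIdx n → H n q := Sum.elim (X n q) (Sum.elim (Y n q) (Z n q))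

/-- The operator attached to a coefficient family. -/
def TW (n : ℕ) (q : ℂ) (w : GenIdx n → ℂ) : Module.End ℂ (F n) := ∑ g, w g • op n q g

/-- The "`z`-symbol" of a coefficient family. -/
def chi (n : ℕ) (q : ℂ) (c : Fin n → ℂ) (m : Fin n →₀ ℕ) : ℂ := ∑ i, c i * q ^ (m i)

lemma rep_gen (hq : q ≠ 0) (g : GenIdx n) : rep n q hq (gen n q g) = op n q g := by
  rcases g with i | i | i
  · exact rep_X hq i
  · exact rep_Y hq i
  · exact rep_Z hq i

lemma rep_TW (hq : q ≠ 0) (w : GenIdx n → ℂ) :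
    rep n q hq (∑ g, w g • gen n q g) = TW n q w := by
  rw [map_sum, TW]
  exact Finset.sum_congr rfl fun g _ => by rw [map_smul, rep_gen hq]

lemma TW_bv (w : GenIdx n → ℂ) (m : Fin n →₀ ℕ) (d : ℕ) :
    TW n q w (bv (m, d)) =
      (∑ i, (w (Sum.inl i) * mu q (m i)) • bv (m - eps i, d + 1)) +
      ((∑ i, w (Sum.inr (Sum.inl i)) • bv (m + eps i, d + 1)) +
        chi n q (fun i => w (Sum.inr (Sum.inr i))) m • bv (m, d + 2)) := by
  rw [TW, LinearMap.sum_apply, Fintype.sum_sum_type, Fintype.sum_sum_type]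
  congr 1
  · exact Finset.sum_congr rfl fun i _ => by
      rw [LinearMap.smul_apply, op_apply, tgt, smul_smul]
  congr 1
  · exact Finset.sum_congr rfl fun i _ => by
      rw [LinearMap.smul_apply, op_apply, tgt]
  · rw [chi, Finset.sum_smul]
    exact Finset.sum_congr rfl fun i _ => by
      rw [LinearMap.smul_apply, op_apply, tgt, smul_smul]

lemma eC0 (w : GenIdx n → ℂ) (m : Fin n →₀ ℕ) (d : ℕ) (m' : Fin n →₀ ℕ) (d' : ℕ)
    (h1 : d + 1 ≠ d') (h2 : d + 2 ≠ d') :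
    (TW n q w (bv (m, d))) (m', d') = 0 := by
  rw [TW_bv]
  simp only [Finsupp.add_apply, Finsupp.smul_apply, Finsupp.finset_sum_apply, bv,
    Finsupp.single_apply, Prod.mk.injEq, smul_eq_mul]
  simp [h1, h2]

lemma eC1 (w : GenIdx n → ℂ) (m : Fin n →₀ ℕ) (k : Fin n) (d : ℕ) (d' : ℕ)
    (hd : d' = d + 1) :
    (TW n q w (bv (m, d))) (m + eps k, d') = w (Sum.inr (Sum.inl k)) := by
  subst hd
  rw [TW_bv]
  simp only [Finsupp.add_apply, Finsupp.smul_apply, Finsupp.finset_sum_apply, bv,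
    Finsupp.single_apply, Prod.mk.injEq, smul_eq_mul]
  have hx : ∀ i : Fin n, ¬(m - eps i = m + eps k) := by
    intro i h
    have h2 := congrArg (fun f => f k) h
    simp only [Finsupp.tsub_apply, add_apply_self] at h2
    omega
  have hy : ∀ i : Fin n, (m + eps i = m + eps k) ↔ i = k := by
    intro i
    constructor
    · intro h
      exact Finsupp.single_left_injective one_ne_zero (add_left_cancel h)
    · rintro rfl; rfl
  have hz : ¬(d + 2 = d + 1) := by omega
  simp [hx, hy, hz]

lemma eC2 (w : GenIdx n → ℂ) (m : Fin n →₀ ℕ) (k : Fin n) (d : ℕ) (d' : ℕ)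
    (hd : d' = d + 1) :
    (TW n q w (bv (m + eps k, d))) (m, d') = w (Sum.inl k) * mu q (m k + 1) := by
  subst hd
  rw [TW_bv]
  simp only [Finsupp.add_apply, Finsupp.smul_apply, Finsupp.finset_sum_apply, bv,
    Finsupp.single_apply, Prod.mk.injEq, smul_eq_mul]
  have hx : ∀ i : Fin n, (m + eps k - eps i = m) ↔ i = k := by
    intro i
    constructor
    · intro h
      by_contra hik
      have h2 := congrArg (fun f => f k) h
      simp only [Finsupp.tsub_apply] at h2
      rw [add_apply_self, eps_apply_ne hik] at h2
      omega
    · rintro rfl; exact add_eps_sub_eps m _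
  have hy : ∀ i : Fin n, ¬(m + eps k + eps i = m) := by
    intro i h
    have h2 := congrArg (fun f => f i) h
    simp only [Finsupp.add_apply] at h2
    have := eps_apply_self (n := n) i
    omega
  have hz : ¬(d + 2 = d + 1) := by omega
  simp [hx, hy, hz, add_apply_self, Finsupp.add_apply, eps_apply_self]

lemma eC3 (w : GenIdx n → ℂ) (m : Fin n →₀ ℕ) (d : ℕ) (d' : ℕ)
    (hd : d' = d + 2) :
    (TW n q w (bv (m, d))) (m, d') = chi n q (fun i => w (Sum.inr (Sum.inr i))) m := by
  subst hd
  rw [TW_bv]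
  simp only [Finsupp.add_apply, Finsupp.smul_apply, Finsupp.finset_sum_apply, bv,
    Finsupp.single_apply, Prod.mk.injEq, smul_eq_mul]
  have hd1 : ¬(d + 1 = d + 2) := by omega
  simp [hd1]

/-- Action of a pure-`z` operator on basis vectors. -/
lemma Zap (w : GenIdx n → ℂ) (hx : ∀ i, w (Sum.inl i) = 0)
    (hy : ∀ i, w (Sum.inr (Sum.inl i)) = 0) (m : Fin n →₀ ℕ) (d : ℕ) :
    TW n q w (bv (m, d)) = chi n q (fun i => w (Sum.inr (Sum.inr i))) m • bv (m, d + 2) := by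
  rw [TW_bv]
  simp [hx, hy]

/-- Coefficients of a pure-`z` operator applied to any vector. -/
lemma ZC (w : GenIdx n → ℂ) (hx : ∀ i, w (Sum.inl i) = 0)
    (hy : ∀ i, w (Sum.inr (Sum.inl i)) = 0) (v : F n) (m' : Fin n →₀ ℕ) (d'' d' : ℕ)
    (hd : d' = d'' + 2) :
    (TW n q w v) (m', d') = chi n q (fun i => w (Sum.inr (Sum.inr i))) m' * v (m', d'') := by
  subst hd
  induction v using Finsupp.induction_linear with
  | zero => simp
  | add f g hf hg => rw [map_add, Finsupp.add_apply, Finsupp.add_apply, hf, hg]; ring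
  | single a b =>
      obtain ⟨ma, da⟩ := a
      have hs : (Finsupp.single ((ma, da) : Idx n) b) = b • bv (ma, da) := by
        simp [bv, Finsupp.smul_single]
      rw [hs, map_smul, Zap w hx hy]
      simp only [Finsupp.smul_apply, smul_eq_mul, bv, Finsupp.single_apply, Prod.mk.injEq,
        Nat.add_right_cancel_iff]
      by_cases h : ma = m' ∧ da = d''
      · obtain ⟨rfl, rfl⟩ := h
        simp; ring
      · simp only [if_neg h]
        ring

lemma CompLD (w1 w2 : GenIdx n → ℂ) (m m' : Fin n →₀ ℕ) :
    (TW n q w1 (TW n q w2 (bv (m, 0)))) (m', 1) = 0 := by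
  rw [TW_bv]
  have hA : ∀ mm : Fin n →₀ ℕ, (TW n q w1 (bv (mm, 0 + 1))) (m', 1) = 0 := fun mm =>
    eC0 w1 mm (0 + 1) m' 1 (by omega) (by omega)
  have hB : ∀ mm : Fin n →₀ ℕ, (TW n q w1 (bv (mm, 0 + 2))) (m', 1) = 0 := fun mm =>
    eC0 w1 mm (0 + 2) m' 1 (by omega) (by omega)
  rw [map_add, map_add, map_smul, map_sum, map_sum]
  simp only [Finsupp.add_apply, Finsupp.smul_apply, Finsupp.finset_sum_apply, map_smul,
    smul_eq_mul, hA, hB]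
  simp

lemma chi_add_eps (c : Fin n → ℂ) (m : Fin n →₀ ℕ) (k : Fin n) :
    chi n q c (m + eps k) = chi n q c m + (q - 1) * q ^ (m k) * c k := by
  rw [chi, chi]
  have : ∀ i ∈ Finset.univ, c i * q ^ ((m + eps k) i)
      = c i * q ^ (m i) + (if i = k then (q - 1) * q ^ (m k) * c k else 0) := by
    intro i _
    rcases eq_or_ne i k with rfl | hik
    · rw [add_apply_self, if_pos rfl, pow_succ]
      ring
    · rw [add_apply_ne m (fun h => hik h.symm), if_neg hik, add_zero]
  rw [Finset.sum_congr rfl this, Finset.sum_add_distrib, Finset.sum_ite_eq' Finset.univ k]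
  simp

lemma chi_eps (c : Fin n → ℂ) (l : Fin n) :
    chi n q c (eps l) = chi n q c 0 + (q - 1) * c l := by
  rw [← zero_add (eps l), chi_add_eps]
  simp

lemma keyA (hq1 : q - 1 ≠ 0) (t : ℂ) (c : Fin n → ℂ) (k : Fin n)
    (h : ∀ m : Fin n →₀ ℕ, t * (chi n q c m - q ^ (m k) * c k) = 0) :
    ∀ l, l ≠ k → t * c l = 0 := by
  intro l hlk
  have h0 := h 0
  have h1 := h (eps l)
  rw [chi_eps] at h1
  rw [eps_apply_ne hlk] at h1
  simp only [Finsupp.coe_zero, Pi.zero_apply, pow_zero, one_mul] at h0 h1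
  have h2 : (q - 1) * (t * c l) = 0 := by linear_combination h1 - h0
  exact (mul_eq_zero.mp h2).resolve_left hq1

lemma keyB (hq1 : q - 1 ≠ 0) (hq2 : q ^ 2 - 1 ≠ 0) (t : ℂ) (c : Fin n → ℂ) (k : Fin n)
    (h : ∀ m : Fin n →₀ ℕ, t * (chi n q c m + q ^ (m k) * q * c k) = 0) :
    ∀ l, t * c l = 0 := by
  intro l
  have h0 := h 0
  simp only [Finsupp.coe_zero, Pi.zero_apply, pow_zero, one_mul] at h0
  rcases eq_or_ne l k with rfl | hlk
  · have h1 := h (eps l)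
    rw [chi_eps, eps_apply_self] at h1
    have h2 : (q ^ 2 - 1) * (t * c l) = 0 := by linear_combination h1 - h0
    exact (mul_eq_zero.mp h2).resolve_left hq2
  · have h1 := h (eps l)
    rw [chi_eps, eps_apply_ne hlk] at h1
    simp only [pow_zero, one_mul] at h1
    have h2 : (q - 1) * (t * c l) = 0 := by linear_combination h1 - h0
    exact (mul_eq_zero.mp h2).resolve_left hq1

lemma mu_identity (hq : q ≠ 0) (k : ℕ) :
    mu q k * q ^ k * (q ^ 2 - 1) = q * (q ^ (2 * k) - 1) := by
  induction k with
  | zero => simp [mu]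
  | succ k ih =>
      have hinv : q⁻¹ * q = 1 := inv_mul_cancel₀ hq
      rw [mu]
      have h2 : 2 * (k + 1) = 2 * k + 2 := by ring
      rw [h2, pow_succ, pow_add]
      calc (q⁻¹ * mu q k + q ^ k) * (q ^ k * q) * (q ^ 2 - 1)
          = (q⁻¹ * q) * (mu q k * q ^ k * (q ^ 2 - 1)) + q ^ k * q ^ k * q * (q ^ 2 - 1) := by
            ring
        _ = q * (q ^ (2 * k) * q ^ 2 - 1) := by
            rw [hinv, ih, one_mul, two_mul, pow_add]
            ring

lemma mu_succ_ne_zero (hq : q ≠ 0) (hq' : NotRootOfUnity q) (k : ℕ) :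
    mu q (k + 1) ≠ 0 := by
  intro h0
  have hid := mu_identity hq (k + 1)
  rw [h0, zero_mul, zero_mul] at hid
  have h1 : q ^ (2 * (k + 1)) - 1 ≠ 0 := sub_ne_zero.mpr (hq' (2 * (k + 1)) (by omega))
  exact (mul_ne_zero hq h1) hid.symm

/-! ### relations in `𝔥_n(q)` -/

lemma hrel_xz (i : Fin n) : X n q i * Z n q i = q • (Z n q i * X n q i) := by
  have h := RingQuot.mkAlgHom_rel ℂ (Rel.xz (n := n) (q := q) i)
  simpa only [map_mul, map_smul, X, Z] using h

lemma hrel_yz (i : Fin n) : Y n q i * Z n q i = q⁻¹ • (Z n q i * Y n q i) := by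
  have h := RingQuot.mkAlgHom_rel ℂ (Rel.yz (n := n) (q := q) i)
  simpa only [map_mul, map_smul, Y, Z] using h

lemma hrel_xy (i : Fin n) : X n q i * Y n q i = q⁻¹ • (Y n q i * X n q i) + Z n q i := by
  have h := RingQuot.mkAlgHom_rel ℂ (Rel.xy (n := n) (q := q) i)
  simpa only [map_mul, map_add, map_smul, X, Y, Z] using h

lemma Z_ne_zero (hq : q ≠ 0) (i : Fin n) : Z n q i ≠ 0 := by
  intro h
  have h2 := congrArg (rep n q hq) h
  rw [rep_Z, map_zero] at h2
  have h3 := congrArg (fun L : Module.End ℂ (F n) => (L (bv (0, 0))) (0, 2)) h2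
  simp only [op_apply, tgt, LinearMap.zero_apply, Finsupp.coe_zero, Pi.zero_apply, pow_zero,
    one_smul, Finsupp.zero_apply] at h3
  rw [bv, Finsupp.single_apply] at h3
  simp at h3

lemma end_congr {L M : Module.End ℂ (F n)} (h : L = M) (v : F n) (p : Idx n) :
    (L v) p = (M v) p := by rw [h]

end Machinery

/-- flexible-target version of `Zap`. -/
lemma Zap' {n : ℕ} {q : ℂ} (w : GenIdx n → ℂ) (hx : ∀ i, w (Sum.inl i) = 0)
    (hy : ∀ i, w (Sum.inr (Sum.inl i)) = 0) (m : Fin n →₀ ℕ) (d d2 : ℕ) (hd2 : d2 = d + 2) :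
    TW n q w (bv (m, d)) = chi n q (fun i => w (Sum.inr (Sum.inr i))) m • bv (m, d2) := by
  subst hd2; exact Zap w hx hy m d

end QHeisenberg

namespace QHeisenberg

/-- The `ℂ`-linear span `V` of the `3n` generators `x_i, y_i, z_i` of `𝔥_n(q)`. -/
def genSpan (n : ℕ) (q : ℂ) : Submodule ℂ (H n q) :=
  Submodule.span ℂ (Set.range (X n q) ∪ Set.range (Y n q) ∪ Set.range (Z n q))

lemma mem_genSpan_iff {n : ℕ} {q : ℂ} {v : H n q} :
    v ∈ genSpan n q ↔ ∃ w : GenIdx n → ℂ, ∑ g, w g • gen n q g = v := by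
  have hr : Set.range (X n q) ∪ Set.range (Y n q) ∪ Set.range (Z n q)
      = Set.range (gen n q) := by
    rw [gen, Set.Sum.elim_range, Set.Sum.elim_range, Set.union_assoc]
  rw [genSpan, hr, Submodule.mem_span_range_iff_exists_fun]

/-- For `q` nonzero and not a root of unity, any graded `ℂ`-algebra
automorphism `φ` of `𝔥_n(q)` (one with `φ(V) ⊆ V`) sends each `z_i` to a nonzero scalar
multiple of `z_{π(i)}` for some permutation `π`. -/
theorem graded_automorphism_on_z (n : ℕ) (hn : 1 ≤ n) (q : ℂ) (hq : q ≠ 0)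
    (hq' : NotRootOfUnity q) (φ : H n q ≃ₐ[ℂ] H n q)
    (hφ : ∀ v ∈ genSpan n q, φ v ∈ genSpan n q) :
    ∃ (π : Equiv.Perm (Fin n)) (ζ : Fin n → ℂ),
      (∀ i, ζ i ≠ 0) ∧ ∀ i, φ (Z n q i) = ζ i • Z n q (π i) := by
  classical
  have hqone : q ≠ 1 := fun h => hq' 1 le_rfl (by rw [pow_one, h])
  have hq1 : q - 1 ≠ 0 := sub_ne_zero.mpr hqone
  have hq2 : q ^ 2 - 1 ≠ 0 := sub_ne_zero.mpr (hq' 2 (by omega))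
  have hXmem : ∀ i, X n q i ∈ genSpan n q := fun i =>
    Submodule.subset_span (Or.inl (Or.inl ⟨i, rfl⟩))
  have hYmem : ∀ i, Y n q i ∈ genSpan n q := fun i =>
    Submodule.subset_span (Or.inl (Or.inr ⟨i, rfl⟩))
  have hZmem : ∀ i, Z n q i ∈ genSpan n q := fun i =>
    Submodule.subset_span (Or.inr ⟨i, rfl⟩)
  have key : ∀ i : Fin n, ∃ p : Fin n × ℂ, p.2 ≠ 0 ∧ φ (Z n q i) = p.2 • Z n q p.1 := by
    intro i
    obtain ⟨wA, hwA⟩ := mem_genSpan_iff.mp (hφ _ (hXmem i))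
    obtain ⟨wB, hwB⟩ := mem_genSpan_iff.mp (hφ _ (hYmem i))
    obtain ⟨wu, hwu⟩ := mem_genSpan_iff.mp (hφ _ (hZmem i))
    have rA : rep n q hq (φ (X n q i)) = TW n q wA := by rw [← hwA]; exact rep_TW hq wA
    have rB : rep n q hq (φ (Y n q i)) = TW n q wB := by rw [← hwB]; exact rep_TW hq wB
    have rU : rep n q hq (φ (Z n q i)) = TW n q wu := by rw [← hwu]; exact rep_TW hq wu
    -- the three relations, pushed to the representation
    have e1 : TW n q wA * TW n q wu = q • (TW n q wu * TW n q wA) := by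
      have h0 : φ (X n q i) * φ (Z n q i) = q • (φ (Z n q i) * φ (X n q i)) := by
        rw [← map_mul, ← map_mul, ← map_smul, hrel_xz]
      have h1 := congrArg (rep n q hq) h0
      rwa [map_smul, map_mul, map_mul, rA, rU] at h1
    have e2 : TW n q wB * TW n q wu = q⁻¹ • (TW n q wu * TW n q wB) := by
      have h0 : φ (Y n q i) * φ (Z n q i) = q⁻¹ • (φ (Z n q i) * φ (Y n q i)) := by
        rw [← map_mul, ← map_mul, ← map_smul, hrel_yz]
      have h1 := congrArg (rep n q hq) h0
      rwa [map_smul, map_mul, map_mul, rB, rU] at h1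
    have e3 : TW n q wA * TW n q wB
        = q⁻¹ • (TW n q wB * TW n q wA) + TW n q wu := by
      have h0 : φ (X n q i) * φ (Y n q i)
          = q⁻¹ • (φ (Y n q i) * φ (X n q i)) + φ (Z n q i) := by
        rw [← map_mul, ← map_mul, ← map_smul, ← map_add, hrel_xy]
      have h1 := congrArg (rep n q hq) h0
      rwa [map_add, map_smul, map_mul, map_mul, rA, rB, rU] at h1
    -- the image of z_i has no x- or y-components
    have hbu : ∀ k, wu (Sum.inr (Sum.inl k)) = 0 := by
      intro k
      have h2 := end_congr e3 (bv (0, 0)) ((0 : Fin n →₀ ℕ) + eps k, 1)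
      simp only [LinearMap.add_apply, LinearMap.smul_apply, Module.End.mul_apply,
        Finsupp.add_apply, Finsupp.smul_apply, smul_eq_mul] at h2
      rw [CompLD wA wB 0 ((0 : Fin n →₀ ℕ) + eps k), CompLD wB wA 0 ((0 : Fin n →₀ ℕ) + eps k),
        eC1 wu 0 k 0 1 rfl] at h2
      simpa using h2.symm
    have hau : ∀ k, wu (Sum.inl k) = 0 := by
      intro k
      have h2 := end_congr e3 (bv ((0 : Fin n →₀ ℕ) + eps k, 0)) ((0 : Fin n →₀ ℕ), 1)
      simp only [LinearMap.add_apply, LinearMap.smul_apply, Module.End.mul_apply,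
        Finsupp.add_apply, Finsupp.smul_apply, smul_eq_mul] at h2
      rw [CompLD wA wB ((0 : Fin n →₀ ℕ) + eps k) (0 : Fin n →₀ ℕ),
        CompLD wB wA ((0 : Fin n →₀ ℕ) + eps k) (0 : Fin n →₀ ℕ),
        eC2 wu 0 k 0 1 rfl] at h2
      simp only [Finsupp.coe_zero, Pi.zero_apply, zero_add, mul_zero, zero_add] at h2
      have hmu1 : mu q 1 = 1 := by simp [mu]
      rw [hmu1, mul_one] at h2
      exact h2.symm
    -- u is nonzero, so some z-coefficient is nonzero
    have hc_ne : ∃ l0, wu (Sum.inr (Sum.inr l0)) ≠ 0 := by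
      by_contra hall
      push_neg at hall
      have hu0 : φ (Z n q i) = 0 := by
        rw [← hwu]
        apply Finset.sum_eq_zero
        intro g _
        rcases g with l | l | l
        · rw [hau l, zero_smul]
        · rw [hbu l, zero_smul]
        · rw [hall l, zero_smul]
      have hZ0 : Z n q i = 0 := φ.injective (by rw [hu0, map_zero])
      exact Z_ne_zero hq i hZ0
    by_cases h2supp : ∃ l1 l2 : Fin n, l1 ≠ l2 ∧
        wu (Sum.inr (Sum.inr l1)) ≠ 0 ∧ wu (Sum.inr (Sum.inr l2)) ≠ 0
    · -- impossible: support of size ≥ 2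
      exfalso
      obtain ⟨l1, l2, hne12, hc1, hc2⟩ := h2supp
      -- x-coefficients of φ(x_i) satisfy keyA-type equations
      have aeq : ∀ (k : Fin n) (m : Fin n →₀ ℕ),
          wA (Sum.inl k) * (chi n q (fun l => wu (Sum.inr (Sum.inr l))) m
            - q ^ (m k) * wu (Sum.inr (Sum.inr k))) = 0 := by
        intro k m
        have h2 := end_congr e1 (bv (m + eps k, 0)) (m, 3)
        rw [Module.End.mul_apply, LinearMap.smul_apply, Module.End.mul_apply,
          Zap' wu hau hbu (m + eps k) 0 2 rfl, map_smul, Finsupp.smul_apply, Finsupp.smul_apply,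
          eC2 wA m k 2 3 rfl,
          ZC wu hau hbu (TW n q wA (bv (m + eps k, 0))) m 1 3 rfl,
          eC2 wA m k 0 1 rfl, smul_eq_mul, smul_eq_mul] at h2
        rw [chi_add_eps] at h2
        have h3 : ((q - 1) * mu q (m k + 1)) * (wA (Sum.inl k)
            * (chi n q (fun l => wu (Sum.inr (Sum.inr l))) m
              - q ^ (m k) * wu (Sum.inr (Sum.inr k)))) = 0 := by
          linear_combination -h2
        exact (mul_eq_zero.mp h3).resolve_left
          (mul_ne_zero hq1 (mu_succ_ne_zero hq hq' (m k)))
      have beq : ∀ (k : Fin n) (m : Fin n →₀ ℕ),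
          wA (Sum.inr (Sum.inl k)) * (chi n q (fun l => wu (Sum.inr (Sum.inr l))) m
            + q ^ (m k) * q * wu (Sum.inr (Sum.inr k))) = 0 := by
        intro k m
        have h2 := end_congr e1 (bv (m, 0)) (m + eps k, 3)
        rw [Module.End.mul_apply, LinearMap.smul_apply, Module.End.mul_apply,
          Zap' wu hau hbu m 0 2 rfl, map_smul, Finsupp.smul_apply, Finsupp.smul_apply,
          eC1 wA m k 2 3 rfl,
          ZC wu hau hbu (TW n q wA (bv (m, 0))) (m + eps k) 1 3 rfl,
          eC1 wA m k 0 1 rfl, smul_eq_mul, smul_eq_mul] at h2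
        rw [chi_add_eps] at h2
        have h3 : (q - 1) * (wA (Sum.inr (Sum.inl k))
            * (chi n q (fun l => wu (Sum.inr (Sum.inr l))) m
              + q ^ (m k) * q * wu (Sum.inr (Sum.inr k)))) = 0 := by
          linear_combination -h2
        exact (mul_eq_zero.mp h3).resolve_left hq1
      have req : ∀ (k : Fin n) (m : Fin n →₀ ℕ),
          wB (Sum.inl k) * (chi n q (fun l => wu (Sum.inr (Sum.inr l))) m
            + q ^ (m k) * q * wu (Sum.inr (Sum.inr k))) = 0 := by
        intro k m
        have h2 := end_congr e2 (bv (m + eps k, 0)) (m, 3)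
        rw [Module.End.mul_apply, LinearMap.smul_apply, Module.End.mul_apply,
          Zap' wu hau hbu (m + eps k) 0 2 rfl, map_smul, Finsupp.smul_apply, Finsupp.smul_apply,
          eC2 wB m k 2 3 rfl,
          ZC wu hau hbu (TW n q wB (bv (m + eps k, 0))) m 1 3 rfl,
          eC2 wB m k 0 1 rfl, smul_eq_mul, smul_eq_mul] at h2
        have h2' : q * (chi n q (fun l => wu (Sum.inr (Sum.inr l))) (m + eps k)
            * (wB (Sum.inl k) * mu q (m k + 1)))
            = chi n q (fun l => wu (Sum.inr (Sum.inr l))) m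
              * (wB (Sum.inl k) * mu q (m k + 1)) := by
          rw [h2, ← mul_assoc, mul_inv_cancel₀ hq, one_mul]
        rw [chi_add_eps] at h2'
        have h3 : ((q - 1) * mu q (m k + 1)) * (wB (Sum.inl k)
            * (chi n q (fun l => wu (Sum.inr (Sum.inr l))) m
              + q ^ (m k) * q * wu (Sum.inr (Sum.inr k)))) = 0 := by
          linear_combination h2'
        exact (mul_eq_zero.mp h3).resolve_left
          (mul_ne_zero hq1 (mu_succ_ne_zero hq hq' (m k)))
      have seq : ∀ (k : Fin n) (m : Fin n →₀ ℕ),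
          wB (Sum.inr (Sum.inl k)) * (chi n q (fun l => wu (Sum.inr (Sum.inr l))) m
            - q ^ (m k) * wu (Sum.inr (Sum.inr k))) = 0 := by
        intro k m
        have h2 := end_congr e2 (bv (m, 0)) (m + eps k, 3)
        rw [Module.End.mul_apply, LinearMap.smul_apply, Module.End.mul_apply,
          Zap' wu hau hbu m 0 2 rfl, map_smul, Finsupp.smul_apply, Finsupp.smul_apply,
          eC1 wB m k 2 3 rfl,
          ZC wu hau hbu (TW n q wB (bv (m, 0))) (m + eps k) 1 3 rfl,
          eC1 wB m k 0 1 rfl, smul_eq_mul, smul_eq_mul] at h2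
        have h2' : q * (chi n q (fun l => wu (Sum.inr (Sum.inr l))) m
            * wB (Sum.inr (Sum.inl k)))
            = chi n q (fun l => wu (Sum.inr (Sum.inr l))) (m + eps k)
              * wB (Sum.inr (Sum.inl k)) := by
          rw [h2, ← mul_assoc, mul_inv_cancel₀ hq, one_mul]
        rw [chi_add_eps] at h2'
        have h3 : (q - 1) * (wB (Sum.inr (Sum.inl k))
            * (chi n q (fun l => wu (Sum.inr (Sum.inr l))) m
              - q ^ (m k) * wu (Sum.inr (Sum.inr k)))) = 0 := by
          linear_combination h2'
        exact (mul_eq_zero.mp h3).resolve_left hq1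
      -- conclude that φ(x_i) and φ(y_i) are pure-z
      have hwAx : ∀ k, wA (Sum.inl k) = 0 := by
        intro k
        have hk := keyA hq1 (wA (Sum.inl k)) (fun l => wu (Sum.inr (Sum.inr l))) k (aeq k)
        rcases eq_or_ne k l1 with rfl | hkl1
        · exact (mul_eq_zero.mp (hk l2 (Ne.symm hne12))).resolve_right hc2
        · exact (mul_eq_zero.mp (hk l1 (Ne.symm hkl1))).resolve_right hc1
      have hwAy : ∀ k, wA (Sum.inr (Sum.inl k)) = 0 := by
        intro k
        have hk := keyB hq1 hq2 (wA (Sum.inr (Sum.inl k)))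
          (fun l => wu (Sum.inr (Sum.inr l))) k (beq k)
        exact (mul_eq_zero.mp (hk l1)).resolve_right hc1
      have hwBx : ∀ k, wB (Sum.inl k) = 0 := by
        intro k
        have hk := keyB hq1 hq2 (wB (Sum.inl k))
          (fun l => wu (Sum.inr (Sum.inr l))) k (req k)
        exact (mul_eq_zero.mp (hk l1)).resolve_right hc1
      have hwBy : ∀ k, wB (Sum.inr (Sum.inl k)) = 0 := by
        intro k
        have hk := keyA hq1 (wB (Sum.inr (Sum.inl k)))
          (fun l => wu (Sum.inr (Sum.inr l))) k (seq k)
        rcases eq_or_ne k l1 with rfl | hkl1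
        · exact (mul_eq_zero.mp (hk l2 (Ne.symm hne12))).resolve_right hc2
        · exact (mul_eq_zero.mp (hk l1 (Ne.symm hkl1))).resolve_right hc1
      -- but then the xy-relation forces chi ≡ 0
      have contra : ∀ m : Fin n →₀ ℕ,
          chi n q (fun l => wu (Sum.inr (Sum.inr l))) m = 0 := by
        intro m
        have h2 := end_congr e3 (bv (m, 0)) (m, 2)
        rw [LinearMap.add_apply, LinearMap.smul_apply, Module.End.mul_apply,
          Module.End.mul_apply, Finsupp.add_apply, Finsupp.smul_apply,
          Zap' wB hwBx hwBy m 0 2 rfl, Zap' wA hwAx hwAy m 0 2 rfl,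
          map_smul, map_smul, Finsupp.smul_apply, Finsupp.smul_apply,
          eC0 wA m 2 m 2 (by omega) (by omega), eC0 wB m 2 m 2 (by omega) (by omega),
          eC3 wu m 0 2 rfl] at h2
        simpa using h2.symm
      have hchi0 := contra 0
      have hchieps := contra (eps l1)
      rw [chi_eps, hchi0, zero_add] at hchieps
      exact hc1 ((mul_eq_zero.mp hchieps).resolve_left hq1)
    · -- single support: u is a multiple of a single z
      push_neg at h2supp
      obtain ⟨l0, hl0⟩ := hc_ne
      refine ⟨(l0, wu (Sum.inr (Sum.inr l0))), hl0, ?_⟩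
      rw [← hwu, Fintype.sum_sum_type, Fintype.sum_sum_type]
      have s1 : ∑ l : Fin n, wu (Sum.inl l) • gen n q (Sum.inl l) = 0 :=
        Finset.sum_eq_zero fun l _ => by rw [hau l, zero_smul]
      have s2 : ∑ l : Fin n, wu (Sum.inr (Sum.inl l)) • gen n q (Sum.inr (Sum.inl l)) = 0 :=
        Finset.sum_eq_zero fun l _ => by rw [hbu l, zero_smul]
      have s3 : ∑ l : Fin n, wu (Sum.inr (Sum.inr l)) • gen n q (Sum.inr (Sum.inr l))
          = wu (Sum.inr (Sum.inr l0)) • Z n q l0 := by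
        rw [Finset.sum_eq_single l0]
        · rfl
        · intro l _ hll0
          have : wu (Sum.inr (Sum.inr l)) = 0 := by
            by_contra hl
            exact hll0 (by
              by_contra hne
              exact hl0 (h2supp l l0 hne hl))
          rw [this, zero_smul]
        · intro h; exact absurd (Finset.mem_univ l0) h
      rw [s1, s2, s3, zero_add, zero_add]
  -- assemble the permutation
  choose p hp1 hp2 using key
  have hinj : Function.Injective fun i => (p i).1 := by
    intro i i' hii
    by_contra hne
    have h1 : φ ((p i').2 • Z n q i) = φ ((p i).2 • Z n q i') := by
      rw [map_smul, map_smul, hp2 i, hp2 i', smul_smul, smul_smul, mul_comm]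
      simp only at hii
      rw [hii]
    have h2 : (p i').2 • Z n q i = (p i).2 • Z n q i' := φ.injective h1
    have h3 := congrArg (rep n q hq) h2
    rw [map_smul, map_smul, rep_Z, rep_Z] at h3
    have hop : ∀ (j : Fin n) (m : Fin n →₀ ℕ),
        ((op n q (Sum.inr (Sum.inr j))) (bv (m, 0))) (m, 2) = q ^ (m j) := by
      intro j m
      rw [op_apply]
      simp [tgt, bv, Finsupp.single_apply]
    have h4 := congrArg (fun L : Module.End ℂ (F n) =>
      (L (bv ((0 : Fin n →₀ ℕ), 0))) ((0 : Fin n →₀ ℕ), 2)) h3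
    have h5 := congrArg (fun L : Module.End ℂ (F n) =>
      (L (bv (eps i, 0))) (eps i, 2)) h3
    simp only [LinearMap.smul_apply, Finsupp.smul_apply, smul_eq_mul] at h4 h5
    rw [hop, hop] at h4
    rw [hop, hop] at h5
    rw [eps_apply_self, eps_apply_ne hne, pow_one, pow_zero, mul_one] at h5
    simp only [Finsupp.coe_zero, Pi.zero_apply, pow_zero, mul_one] at h4
    -- h4 : (p i').2 = (p i).2 ; h5 : (p i').2 * q = (p i).2
    have h6 : (p i').2 * (q - 1) = 0 := by linear_combination h5 - h4
    rcases mul_eq_zero.mp h6 with h7 | h7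
    · exact hp1 i' h7
    · exact hq1 h7
  refine ⟨Equiv.ofBijective _ (Finite.injective_iff_bijective.mp hinj),
    fun i => (p i).2, hp1, fun i => ?_⟩
  exact hp2 i

end QHeisenberg
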